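/- Consider the map π_t: ℝ^k → ℝ[x,y] sending v to Σ_{j=0}^{k-1} v_j x^{t(k-1-j)} y^{t j}, and the composition of two 1-D convolutions α_{w₂,s₂} ∘ α_{w₁,s₁} with filters w₁ ∈ ℝ^{k₁}, w₂ ∈ ℝ^{k₂} and strides s₁, s₂. Then the end-to-end filter v ∈ ℝ^{(k₂−1)s₁+k₁} of the composed convolution satisfies π₁(v) = π_{s₁}(w₂)·π₁(w₁), i.e., v_m = Σ_{(j,l): j s₁ + l = m, 0≤j<k₂, 0≤l<k₁} w₂,_j · w₁,_l. -/
import Mathlib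


/-- The 1-D convolution with filter `w` (size k) and stride `s`, acting on signals ℕ → ℝ:
(α_{w,s}(X))_i = Σ_{j=0}^{k-1} w_j X_{is+j}. -/
def conv1d (k : ℕ) (w : Fin k → ℝ) (s : ℕ) (X : ℕ → ℝ) : ℕ → ℝ :=
  fun i => ∑ j : Fin k, w j * X (i * s + j)

/-- π_t sends a filter v ∈ ℝ^k to the sparse homogeneous polynomial
Σ_j v_j x^{t(k-1-j)} y^{tj}, where x = X 0 and y = X 1. -/
noncomputable def filterPoly (t k : ℕ) (v : Fin k → ℝ) : MvPolynomial (Fin 2) ℝ :=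
  ∑ j : Fin k, MvPolynomial.C (v j) *
    MvPolynomial.X 0 ^ (t * (k - 1 - (j : ℕ))) * MvPolynomial.X 1 ^ (t * (j : ℕ))

lemma sum_if_fin {M : Type*} [AddCommMonoid M] {K : ℕ} (a : ℕ) (h : a < K) (f : Fin K → M) :
    (∑ m : Fin K, if a = (m : ℕ) then f m else 0) = f ⟨a, h⟩ := by
  have he : ∀ m : Fin K, (a = (m : ℕ)) = ((⟨a, h⟩ : Fin K) = m) := fun m => by
    simp [Fin.ext_iff]
  simp_rw [he]
  simp

lemma swap3 {M : Type*} [AddCommMonoid M] {K A B : ℕ} (f : Fin K → Fin A → Fin B → M) :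
    ∑ m : Fin K, ∑ j : Fin A, ∑ l : Fin B, f m j l
      = ∑ j : Fin A, ∑ l : Fin B, ∑ m : Fin K, f m j l := by
  rw [Finset.sum_comm]
  exact Finset.sum_congr rfl fun j _ => Finset.sum_comm

/-- The composition of two 1-D convolutions with filters w₁, w₂ and strides
s₁, s₂ is the convolution of stride s₁s₂ with end-to-end filter
v_m = Σ_{js₁+l=m} w₂ⱼ w₁ₗ, and π₁(v) = π_{s₁}(w₂)·π₁(w₁). -/
theorem stmt_17 (k₁ k₂ s₁ s₂ : ℕ) (hk₁ : 1 ≤ k₁) (hk₂ : 1 ≤ k₂)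
    (w₁ : Fin k₁ → ℝ) (w₂ : Fin k₂ → ℝ)
    (v : Fin ((k₂ - 1) * s₁ + k₁) → ℝ)
    (hv : ∀ m : Fin ((k₂ - 1) * s₁ + k₁),
      v m = ∑ j : Fin k₂, ∑ l : Fin k₁,
        if (j : ℕ) * s₁ + (l : ℕ) = (m : ℕ) then w₂ j * w₁ l else 0) :
    (∀ X : ℕ → ℝ, ∀ i : ℕ,
      conv1d k₂ w₂ s₂ (conv1d k₁ w₁ s₁ X) i = conv1d ((k₂ - 1) * s₁ + k₁) v (s₁ * s₂) X i) ∧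
    filterPoly 1 ((k₂ - 1) * s₁ + k₁) v = filterPoly s₁ k₂ w₂ * filterPoly 1 k₁ w₁ := by
  have hb : ∀ (j : Fin k₂) (l : Fin k₁), (j : ℕ) * s₁ + (l : ℕ) < (k₂ - 1) * s₁ + k₁ := by
    intro j l
    have hj : (j : ℕ) ≤ k₂ - 1 := Nat.le_sub_one_of_lt j.isLt
    have h1 := Nat.mul_le_mul_right s₁ hj
    have h2 := l.isLt
    omega
  constructor
  · intro X i
    simp only [conv1d]
    have harg : ∀ (j : Fin k₂) (l : Fin k₁),
        (i * s₂ + (j : ℕ)) * s₁ + (l : ℕ) = i * (s₁ * s₂) + ((j : ℕ) * s₁ + (l : ℕ)) := by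
      intro j l; ring
    calc ∑ j : Fin k₂, w₂ j * ∑ l : Fin k₁, w₁ l * X ((i * s₂ + (j : ℕ)) * s₁ + (l : ℕ))
        = ∑ j : Fin k₂, ∑ l : Fin k₁,
            w₂ j * w₁ l * X (i * (s₁ * s₂) + ((j : ℕ) * s₁ + (l : ℕ))) := by
          simp_rw [Finset.mul_sum, harg, mul_assoc]
      _ = ∑ m : Fin ((k₂ - 1) * s₁ + k₁), v m * X (i * (s₁ * s₂) + (m : ℕ)) := by
          simp only [hv, Finset.sum_mul, ite_mul, zero_mul]
          rw [swap3]
          refine Finset.sum_congr rfl fun j _ => Finset.sum_congr rfl fun l _ => ?_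
          rw [sum_if_fin _ (hb j l)]
  · simp only [filterPoly]
    simp only [hv, map_sum, apply_ite MvPolynomial.C, map_zero, Finset.sum_mul, ite_mul,
      zero_mul, Finset.mul_sum]
    rw [swap3]
    rw [Finset.sum_comm]
    refine Finset.sum_congr rfl fun l _ => Finset.sum_congr rfl fun j _ => ?_
    rw [sum_if_fin _ (hb j l)]
    have hj : (j : ℕ) ≤ k₂ - 1 := Nat.le_sub_one_of_lt j.isLt
    have hl : (l : ℕ) ≤ k₁ - 1 := Nat.le_sub_one_of_lt l.isLt
    have e1 : 1 * ((k₂ - 1) * s₁ + k₁ - 1 - ((j : ℕ) * s₁ + (l : ℕ)))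
        = s₁ * (k₂ - 1 - (j : ℕ)) + 1 * (k₁ - 1 - (l : ℕ)) := by
      have h3 : (k₂ - 1 - (j : ℕ)) * s₁ + (j : ℕ) * s₁ = (k₂ - 1) * s₁ := by
        rw [← Nat.add_mul, Nat.sub_add_cancel hj]
      have h4 : s₁ * (k₂ - 1 - (j : ℕ)) = (k₂ - 1 - (j : ℕ)) * s₁ := Nat.mul_comm _ _
      omega
    have e2 : 1 * ((j : ℕ) * s₁ + (l : ℕ)) = s₁ * (j : ℕ) + 1 * (l : ℕ) := by ring
    rw [e1, e2, pow_add, pow_add, map_mul]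
    ring
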